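/- Let B and C be unital C*-algebras, let π : B → C be a surjective unital *-homomorphism, let x_1, …, x_n ∈ B, let c ∈ C, and let ε > 0. Then there exists b ∈ B with π(b) = c, ‖b‖ ≤ ‖c‖ + ε, and ‖b x_i − x_i b‖ ≤ ‖c · π(x_i) − π(x_i) · c‖ + ε for all i = 1, …, n. -/

import Mathlib

set_option linter.unusedSectionVars false
set_option maxHeartbeats 1000000

section QuasicentralAux

variable {B C : Type*} [CStarAlgebra B] [PartialOrder B] [StarOrderedRing B] [Nontrivial B]
  [CStarAlgebra C] [PartialOrder C] [StarOrderedRing C] [Nontrivial C]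

lemma my_cont (π : B →⋆ₐ[ℂ] C) : Continuous π :=
  AddMonoidHomClass.continuous_of_bound π 1
    (fun a => by simpa only [one_mul] using NonUnitalStarAlgHom.norm_apply_le π a)

lemma exists_lift_norm_le (π : B →⋆ₐ[ℂ] C) (hπ : Function.Surjective π) (c : C)
    (ε : ℝ) (hε : 0 < ε) : ∃ d : B, π d = c ∧ ‖d‖ ≤ ‖c‖ + ε := by
  obtain ⟨a, ha⟩ := hπ c
  have hcε : (0:ℝ) < ‖c‖ + ε := lt_of_lt_of_le hε (le_add_of_nonneg_left (norm_nonneg c))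
  set u : ℝ := (‖c‖ + ε)^2 with hu_def
  have hu : (0:ℝ) < u := by positivity
  set f : ℝ → ℝ := fun s => Real.sqrt (u / max s u) with hf_def
  have hmaxpos : ∀ s : ℝ, (0:ℝ) < max s u := fun s => lt_of_lt_of_le hu (le_max_right s u)
  have hfc : Continuous f := by
    apply Real.continuous_sqrt.comp
    exact continuous_const.div (continuous_id.max continuous_const) (fun s => (hmaxpos s).ne')
  set p : B := star a * a with hp_def
  have hpnn : (0:B) ≤ p := star_mul_self_nonneg a
  have hpsa : IsSelfAdjoint p := IsSelfAdjoint.of_nonneg hpnn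
  set w : B := cfc f p with hw_def
  have hwsa : IsSelfAdjoint w := cfc_predicate f p
  -- image of w is 1
  have hπp : π p = star c * c := by rw [hp_def, map_mul, map_star, ha]
  have hπpsa : IsSelfAdjoint (π p) := hpsa.map π
  have hπw : π w = 1 := by
    rw [hw_def, StarAlgHomClass.map_cfc π f p hfc.continuousOn (my_cont π) hpsa hπpsa]
    have hspec : (spectrum ℝ (π p)).EqOn f (fun _ => (1:ℝ)) := by
      intro s hs
      have hs0 : (0:ℝ) ≤ s := by
        rw [hπp] at hs
        exact spectrum_nonneg_of_nonneg (star_mul_self_nonneg c) hs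
      have hsle : s ≤ u := by
        have := spectrum.norm_le_norm_of_mem hs
        rw [hπp] at hs
        have h2 := spectrum.norm_le_norm_of_mem hs
        rw [Real.norm_of_nonneg hs0] at h2
        calc s ≤ ‖star c * c‖ := h2
          _ = ‖c‖ * ‖c‖ := CStarRing.norm_star_mul_self
          _ ≤ (‖c‖ + ε) * (‖c‖ + ε) := by nlinarith [norm_nonneg c]
          _ = u := by rw [hu_def]; ring
      simp only [hf_def]
      rw [max_eq_right hsle, div_self hu.ne', Real.sqrt_one]
    rw [cfc_congr hspec, cfc_const_one ℝ (π p)]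
  refine ⟨a * w, by rw [map_mul, ha, hπw, mul_one], ?_⟩
  -- norm bound
  have hdd : star (a * w) * (a * w) = cfc (fun s => f s * (s * f s)) p := by
    have h1 : cfc (fun s => f s * (s * f s)) p = w * (p * w) := by
      rw [cfc_mul f (fun s => s * f s) p hfc.continuousOn
          ((continuous_id.mul hfc).continuousOn),
        cfc_mul (fun s : ℝ => s) f p continuous_id.continuousOn hfc.continuousOn, cfc_id' ℝ p]
    rw [h1, star_mul, hwsa.star_eq, hp_def]
    noncomm_ring
  have hnorm : ‖star (a * w) * (a * w)‖ ≤ u := by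
    rw [hdd]
    apply norm_cfc_le hu.le
    intro s hs
    have hs0 : (0:ℝ) ≤ s := spectrum_nonneg_of_nonneg hpnn hs
    have hfs : f s * (s * f s) = s * (u / max s u) := by
      simp only [hf_def]
      rw [show Real.sqrt (u / max s u) * (s * Real.sqrt (u / max s u))
        = Real.sqrt (u / max s u) * Real.sqrt (u / max s u) * s by ring,
        Real.mul_self_sqrt (by positivity)]
      ring
    rw [hfs, Real.norm_of_nonneg (by positivity)]
    rcases le_total s u with h | h
    · rw [max_eq_right h, div_self hu.ne', mul_one]; exact h
    · rw [max_eq_left h, mul_comm, div_mul_cancel₀ _ (lt_of_lt_of_le hu h).ne']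
  have := CStarRing.norm_star_mul_self (x := a * w)
  nlinarith [norm_nonneg (a * w), hcε]


lemma exists_approx_unit (π : B →⋆ₐ[ℂ] C) {ι : Type} [Fintype ι] (G : ι → B)
    (η : ℝ) (hη : 0 < η) :
    ∃ e : B, 0 ≤ e ∧ e ≤ 1 ∧ ((∀ i, π (G i) = 0) → π e = 0) ∧
      ∀ i, ‖(1 - e) * G i‖ ≤ η := by
  classical
  set h : B := ∑ i : ι, G i * star (G i) with hh_def
  have hhnn : (0:B) ≤ h := Finset.sum_nonneg (fun i _ => mul_star_self_nonneg (G i))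
  have hhsa : IsSelfAdjoint h := IsSelfAdjoint.of_nonneg hhnn
  have hspec : ∀ s ∈ spectrum ℝ h, (0:ℝ) ≤ s := fun s hs => spectrum_nonneg_of_nonneg hhnn hs
  set M : ℝ := (η * η)⁻¹ with hM_def
  have hM : (0:ℝ) < M := by positivity
  have hD : ∀ s ∈ spectrum ℝ h, (0:ℝ) < 1 + M * s := by
    intro s hs
    have := hspec s hs
    nlinarith
  set g : ℝ → ℝ := fun s => M * s / (1 + M * s) with hg_def
  have hgc : ContinuousOn g (spectrum ℝ h) := by
    apply ContinuousOn.div (by fun_prop) (by fun_prop)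
    intro s hs; exact (hD s hs).ne'
  set k : ℝ → ℝ := fun s => M / (1 + M * s) with hk_def
  have hkc : ContinuousOn k (spectrum ℝ h) := by
    apply ContinuousOn.div (by fun_prop) (by fun_prop)
    intro s hs; exact (hD s hs).ne'
  set e : B := cfc g h with he_def
  have hesa : IsSelfAdjoint e := cfc_predicate g h
  have henn : (0:B) ≤ e := by
    rw [he_def]
    apply cfc_nonneg
    intro s hs
    have h0 := hspec s hs
    have h1 := hD s hs
    positivity
  have hone_sub : (1:B) - e = cfc (fun s => 1 - g s) h := by
    rw [he_def, cfc_sub (fun _ => (1:ℝ)) g h (by fun_prop) hgc, cfc_const_one ℝ h]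
  have hle1 : e ≤ 1 := by
    rw [← sub_nonneg, hone_sub]
    apply cfc_nonneg
    intro s hs
    have h0 := hspec s hs
    have h1 := hD s hs
    rw [sub_nonneg, div_le_one h1]
    nlinarith
  refine ⟨e, henn, hle1, ?_, ?_⟩
  · -- vanishing under π
    intro hG
    have hfac : e = h * cfc k h := by
      have h1 : (spectrum ℝ h).EqOn g (fun s => s * k s) := by
        intro s hs
        simp only [hg_def, hk_def]
        rw [mul_comm M s, mul_div_assoc]
      rw [he_def, cfc_congr h1, cfc_mul (fun s : ℝ => s) k h continuous_id.continuousOn hkc,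
        cfc_id' ℝ h]
    have hπh : π h = 0 := by
      rw [hh_def, map_sum]
      apply Finset.sum_eq_zero
      intro i _
      rw [map_mul, hG i, zero_mul]
    rw [hfac, map_mul, hπh, zero_mul]
  · -- norm bounds
    intro i
    have hGh : G i * star (G i) ≤ h :=
      Finset.single_le_sum (f := fun i => G i * star (G i))
        (fun i _ => mul_star_self_nonneg (G i)) (Finset.mem_univ i)
    have husa : IsSelfAdjoint ((1:B) - e) := IsSelfAdjoint.of_nonneg (sub_nonneg.mpr hle1)
    have hconj : (1 - e) * (G i * star (G i)) * (1 - e) ≤ (1 - e) * h * (1 - e) :=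
      husa.conjugate_le_conjugate hGh
    have hchain : (1 - e) * h * (1 - e) = cfc (fun s => (1 - g s) * (s * (1 - g s))) h := by
      rw [cfc_mul (fun s => 1 - g s) (fun s => s * (1 - g s)) h
          (by exact (continuousOn_const.sub hgc))
          (continuousOn_id.mul (continuousOn_const.sub hgc)),
        cfc_mul (fun s : ℝ => s) (fun s => 1 - g s) h continuous_id.continuousOn
          (continuousOn_const.sub hgc),
        cfc_id' ℝ h, ← hone_sub]
      noncomm_ring
    have hnormc : ‖(1 - e) * h * (1 - e)‖ ≤ M⁻¹ := by
      rw [hchain]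
      apply norm_cfc_le (by positivity)
      intro s hs
      have h0 := hspec s hs
      have h1 := hD s hs
      set d : ℝ := 1 + M * s with hd_def
      have hgs : 1 - g s = 1 / d := by
        rw [hg_def]
        field_simp
        rw [hd_def]; ring
      have hval : (1 - g s) * (s * (1 - g s)) = s / (d * d) := by
        rw [hgs]
        field_simp
      rw [hval, Real.norm_of_nonneg (by positivity)]
      rw [div_le_iff₀ (by positivity), ← sub_nonneg]
      have hrw : M⁻¹ * (d * d) - s = (d * d - M * s) / M := by field_simp
      rw [hrw]
      apply div_nonneg _ hM.le
      nlinarith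
    have hsq : ‖(1 - e) * G i‖ * ‖(1 - e) * G i‖ ≤ M⁻¹ := by
      have hyy : ((1 - e) * G i) * star ((1 - e) * G i)
          = (1 - e) * (G i * star (G i)) * (1 - e) := by
        rw [star_mul, husa.star_eq]
        noncomm_ring
      calc ‖(1 - e) * G i‖ * ‖(1 - e) * G i‖
          = ‖((1 - e) * G i) * star ((1 - e) * G i)‖ := (CStarRing.norm_self_mul_star).symm
        _ = ‖(1 - e) * (G i * star (G i)) * (1 - e)‖ := by rw [hyy]
        _ ≤ ‖(1 - e) * h * (1 - e)‖ := by
            apply CStarAlgebra.norm_le_norm_of_nonneg_of_le _ hconj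
            rw [← hyy]
            exact mul_star_self_nonneg _
        _ ≤ M⁻¹ := hnormc
    have hMη : M⁻¹ = η * η := by rw [hM_def, inv_inv]
    nlinarith [norm_nonneg ((1 - e) * G i)]

lemma exists_quasicentral (π : B →⋆ₐ[ℂ] C) (n : ℕ) (x : Fin n → B) (j : Fin n → B)
    (hj : ∀ i, π (j i) = 0) (δ : ℝ) (hδ : 0 < δ) :
    ∃ e : B, π e = 0 ∧ 0 ≤ e ∧ e ≤ 1 ∧ (∀ i, ‖(1 - e) * j i‖ ≤ δ) ∧
      (∀ i, ‖e * x i - x i * e‖ ≤ δ) := by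
  classical
  set X : ℝ := 1 + ∑ i : Fin n, ‖x i‖ with hX_def
  have hX1 : (1:ℝ) ≤ X := le_add_of_nonneg_right (Finset.sum_nonneg fun i _ => norm_nonneg _)
  have hX0 : (0:ℝ) < X := lt_of_lt_of_le one_pos hX1
  have hxX : ∀ i, ‖x i‖ ≤ X := by
    intro i
    have h1 : ‖x i‖ ≤ ∑ i : Fin n, ‖x i‖ :=
      Finset.single_le_sum (fun i _ => norm_nonneg _) (Finset.mem_univ i)
    linarith
  set tol : ℝ := min δ (δ^2 / (8 * X)) with htol_def
  have htol : 0 < tol := lt_min hδ (by positivity)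
  have htolδ : tol ≤ δ := min_le_left _ _
  have htol8 : tol ≤ δ^2 / (8 * X) := min_le_right _ _
  set N : ℕ := max 1 ⌈8 * X^2 / δ^2⌉₊ with hN_def
  have hN1 : 1 ≤ N := le_max_left _ _
  have hNpos : (0:ℝ) < (N:ℝ) := by
    have : (1:ℝ) ≤ (N:ℝ) := by exact_mod_cast hN1
    linarith
  have hNbig : 8 * X^2 / δ^2 ≤ (N:ℝ) := by
    refine le_trans (Nat.le_ceil _) ?_
    have h2 : (⌈8 * X^2 / δ^2⌉₊ : ℕ) ≤ N := le_max_right 1 _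
    exact_mod_cast h2
  -- the recursively constructed approximate units
  set Gf : (k : ℕ) → (Fin k → B) → (Fin n ⊕ (Fin k × Fin n × Bool)) → B :=
    fun k v => Sum.elim j (fun q => cond q.2.2 (v q.1 * x q.2.1 - x q.2.1 * v q.1)
      (star (x q.2.1) * (v q.1 * x q.2.1 - x q.2.1 * v q.1))) with hGf_def
  set g : (k : ℕ) → (Fin k → B) → B :=
    fun k v => (exists_approx_unit π (Gf k v) tol htol).choose with hg_def
  set F : (k : ℕ) → Fin k → B := fun k => Nat.rec (motive := fun m => Fin m → B) Fin.elim0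
    (fun m prev => Fin.snoc prev (g m prev)) k with hF_def
  set E : ℕ → B := fun k => F (k+1) (Fin.last k) with hE_def
  have hFsucc : ∀ k, F (k+1) = Fin.snoc (F k) (g k (F k)) := fun k => rfl
  have hEg : ∀ k, E k = g k (F k) := by
    intro k
    show F (k+1) (Fin.last k) = g k (F k)
    rw [hFsucc k, Fin.snoc_last]
  have hFE : ∀ k (l : Fin k), F k l = E l.val := by
    intro k
    induction k with
    | zero => exact fun l => l.elim0
    | succ m ih =>
      intro l
      refine Fin.lastCases ?_ ?_ l
      · rfl
      · intro l'
        rw [hFsucc m, Fin.snoc_castSucc, ih l']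
        rfl
  have hspec : ∀ k, 0 ≤ E k ∧ E k ≤ 1 ∧ ((∀ q, π (Gf k (F k) q) = 0) → π (E k) = 0) ∧
      ∀ q, ‖(1 - E k) * Gf k (F k) q‖ ≤ tol := by
    intro k
    rw [hEg k]
    exact (exists_approx_unit π (Gf k (F k)) tol htol).choose_spec
  set z : ℕ → Fin n → B := fun k i => E k * x i - x i * E k with hz_def
  have hEsa : ∀ k, IsSelfAdjoint (E k) := fun k => IsSelfAdjoint.of_nonneg (hspec k).1
  have hπE : ∀ k, π (E k) = 0 := by
    intro k
    induction k using Nat.strong_induction_on with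
    | _ k ih =>
      apply (hspec k).2.2.1
      intro q
      rcases q with i | ⟨l, i, b⟩
      · simpa only [hGf_def, Sum.elim_inl] using hj i
      · have hl : π (F k l) = 0 := by rw [hFE k l]; exact ih l.val l.isLt
        have hzl : π (F k l * x i - x i * F k l) = 0 := by
          rw [map_sub, map_mul, map_mul, hl, zero_mul, mul_zero, sub_zero]
        cases b
        · simp only [hGf_def, Sum.elim_inr, cond_false]
          rw [map_mul, hzl, mul_zero]
        · simpa only [hGf_def, Sum.elim_inr, cond_true] using hzl
  have hjb : ∀ k i, ‖(1 - E k) * j i‖ ≤ tol := by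
    intro k i
    simpa only [hGf_def, Sum.elim_inl] using (hspec k).2.2.2 (Sum.inl i)
  have hz1 : ∀ k l i, l < k → ‖(1 - E k) * z l i‖ ≤ tol := by
    intro k l i hlk
    have h1 := (hspec k).2.2.2 (Sum.inr (⟨l, hlk⟩, i, true))
    simp only [hGf_def, Sum.elim_inr, cond_true] at h1
    rwa [hFE k ⟨l, hlk⟩] at h1
  have hz2 : ∀ k l i, l < k → ‖(1 - E k) * (star (x i) * z l i)‖ ≤ tol := by
    intro k l i hlk
    have h1 := (hspec k).2.2.2 (Sum.inr (⟨l, hlk⟩, i, false))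
    simp only [hGf_def, Sum.elim_inr, cond_false] at h1
    rwa [hFE k ⟨l, hlk⟩] at h1
  -- the averaged element
  have my_smul_nonneg : ∀ {r : ℝ}, 0 ≤ r → ∀ {a : B}, 0 ≤ a → 0 ≤ (r : ℂ) • a := by
    intro r hr a ha
    have hs : CFC.sqrt a * CFC.sqrt a = a := CFC.sqrt_mul_sqrt_self a ha
    have hssa : IsSelfAdjoint (CFC.sqrt a) := IsSelfAdjoint.of_nonneg (CFC.sqrt_nonneg a)
    have key : (r : ℂ) • a
        = star ((Real.sqrt r : ℂ) • CFC.sqrt a) * ((Real.sqrt r : ℂ) • CFC.sqrt a) := by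
      rw [star_smul, hssa.star_eq, smul_mul_smul_comm, hs]
      congr 1
      rw [Complex.star_def, Complex.conj_ofReal, ← Complex.ofReal_mul, Real.mul_self_sqrt hr]
    rw [key]
    exact star_mul_self_nonneg _
  have hNC : ((N:ℂ)) ≠ 0 := by
    simp only [ne_eq, Nat.cast_eq_zero]
    omega
  have hcinv : ((N:ℂ))⁻¹ = (((N:ℝ)⁻¹ : ℝ) : ℂ) := by
    rw [Complex.ofReal_inv, Complex.ofReal_natCast]
  have hnormNinv : ‖((N:ℂ))⁻¹‖ = (N:ℝ)⁻¹ := by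
    rw [norm_inv, Complex.norm_natCast]
  set e : B := (N:ℂ)⁻¹ • ∑ k ∈ Finset.range N, E k with he_def
  have hπe : π e = 0 := by
    rw [he_def, map_smul, map_sum]
    rw [Finset.sum_eq_zero (fun k _ => hπE k), smul_zero]
  have henn : (0:B) ≤ e := by
    rw [he_def, hcinv]
    exact my_smul_nonneg (by positivity) (Finset.sum_nonneg fun k _ => (hspec k).1)
  have hsub : (1:B) - e = (N:ℂ)⁻¹ • ∑ k ∈ Finset.range N, ((1:B) - E k) := by
    have h1 : ∑ k ∈ Finset.range N, ((1:B) - E k)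
        = (N:ℂ) • (1:B) - ∑ k ∈ Finset.range N, E k := by
      rw [Finset.sum_sub_distrib, Finset.sum_const, Finset.card_range,
        ← Nat.cast_smul_eq_nsmul ℂ]
    rw [h1, smul_sub, smul_smul, inv_mul_cancel₀ hNC, one_smul, he_def]
  have hle1 : e ≤ 1 := by
    rw [← sub_nonneg, hsub, hcinv]
    exact my_smul_nonneg (by positivity)
      (Finset.sum_nonneg fun k _ => sub_nonneg.mpr (hspec k).2.1)
  have hEnorm : ∀ k, ‖E k‖ ≤ 1 := by
    intro k
    refine le_trans (CStarAlgebra.norm_le_norm_of_nonneg_of_le (hspec k).1 (hspec k).2.1) ?_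
    rw [norm_one]
  refine ⟨e, hπe, henn, hle1, ?_, ?_⟩
  · -- bound on (1-e) * j i
    intro i
    have h1 : (1 - e) * j i = (N:ℂ)⁻¹ • ∑ k ∈ Finset.range N, ((1 - E k) * j i) := by
      rw [hsub, smul_mul_assoc, Finset.sum_mul]
    rw [h1, norm_smul, hnormNinv]
    have h2 : ‖∑ k ∈ Finset.range N, ((1 - E k) * j i)‖ ≤ (N:ℝ) * tol := by
      refine le_trans (norm_sum_le _ _) ?_
      refine le_trans (Finset.sum_le_sum (fun k _ => hjb k i)) ?_
      rw [Finset.sum_const, Finset.card_range, nsmul_eq_mul]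
    calc (N:ℝ)⁻¹ * ‖∑ k ∈ Finset.range N, ((1 - E k) * j i)‖
        ≤ (N:ℝ)⁻¹ * ((N:ℝ) * tol) := by
          exact mul_le_mul_of_nonneg_left h2 (by positivity)
      _ = tol := by field_simp
      _ ≤ δ := htolδ
  · -- commutator bound
    intro i
    have hzn : ∀ k, ‖z k i‖ ≤ 2 * X := by
      intro k
      calc ‖z k i‖ ≤ ‖E k * x i‖ + ‖x i * E k‖ := norm_sub_le _ _
        _ ≤ ‖E k‖ * ‖x i‖ + ‖x i‖ * ‖E k‖ := add_le_add (norm_mul_le _ _) (norm_mul_le _ _)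
        _ ≤ 1 * X + X * 1 := add_le_add
            (mul_le_mul (hEnorm k) (hxX i) (norm_nonneg _) zero_le_one)
            (mul_le_mul (hxX i) (hEnorm k) (norm_nonneg _) hX0.le)
        _ = 2 * X := by ring
    have hcross : ∀ k l, k ≠ l → ‖star (z k i) * z l i‖ ≤ 2 * X * tol := by
      intro k l hkl
      rcases lt_or_gt_of_ne hkl with hlt | hgt
      · -- k < l
        have hid : star (z k i) * z l i
            = (star (z k i) * E l - star (z k i)) * x i
              - ((star (z k i) * x i) * E l - star (z k i) * x i) := by
          simp only [hz_def]
          noncomm_ring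
        have hA : ‖star (z k i) * E l - star (z k i)‖ ≤ tol := by
          have hsa1 : IsSelfAdjoint (E l - 1) := (hEsa l).sub (IsSelfAdjoint.one B)
          have h2 : star ((E l - 1) * z k i) = star (z k i) * E l - star (z k i) := by
            rw [star_mul, hsa1.star_eq, mul_sub, mul_one]
          rw [← h2, norm_star,
            show (E l - 1) * z k i = -((1 - E l) * z k i) by noncomm_ring, norm_neg]
          exact hz1 l k i hlt
        have hB : ‖(star (z k i) * x i) * E l - star (z k i) * x i‖ ≤ tol := by
          have hsa1 : IsSelfAdjoint (E l - 1) := (hEsa l).sub (IsSelfAdjoint.one B)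
          have h2 : star ((E l - 1) * (star (x i) * z k i))
              = (star (z k i) * x i) * E l - star (z k i) * x i := by
            rw [star_mul, hsa1.star_eq, star_mul, star_star, mul_sub, mul_one]
          rw [← h2, norm_star,
            show (E l - 1) * (star (x i) * z k i) = -((1 - E l) * (star (x i) * z k i))
              by noncomm_ring, norm_neg]
          exact hz2 l k i hlt
        calc ‖star (z k i) * z l i‖
            ≤ ‖(star (z k i) * E l - star (z k i)) * x i‖
              + ‖(star (z k i) * x i) * E l - star (z k i) * x i‖ := by
              rw [hid]; exact norm_sub_le _ _
          _ ≤ tol * X + tol :=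
              add_le_add (le_trans (norm_mul_le _ _)
                (mul_le_mul hA (hxX i) (norm_nonneg _) htol.le)) hB
          _ ≤ 2 * X * tol := by nlinarith
      · -- l < k
        have hid : star (z k i) * z l i
            = star (x i) * (E k * z l i - z l i)
              - (E k * (star (x i) * z l i) - star (x i) * z l i) := by
          simp only [hz_def]
          rw [star_sub, star_mul, star_mul, (hEsa k).star_eq]
          noncomm_ring
        have hA : ‖E k * z l i - z l i‖ ≤ tol := by
          rw [show E k * z l i - z l i = -((1 - E k) * z l i) by noncomm_ring, norm_neg]
          exact hz1 k l i hgt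
        have hB : ‖E k * (star (x i) * z l i) - star (x i) * z l i‖ ≤ tol := by
          rw [show E k * (star (x i) * z l i) - star (x i) * z l i
              = -((1 - E k) * (star (x i) * z l i)) by noncomm_ring, norm_neg]
          exact hz2 k l i hgt
        calc ‖star (z k i) * z l i‖
            ≤ ‖star (x i) * (E k * z l i - z l i)‖
              + ‖E k * (star (x i) * z l i) - star (x i) * z l i‖ := by
              rw [hid]; exact norm_sub_le _ _
          _ ≤ X * tol + tol := by
              refine add_le_add (le_trans (norm_mul_le _ _) ?_) hB
              rw [norm_star]
              exact mul_le_mul (hxX i) hA (norm_nonneg _) hX0.le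
          _ ≤ 2 * X * tol := by nlinarith
    set S : B := ∑ k ∈ Finset.range N, z k i with hS_def
    have hcomm_eq : e * x i - x i * e = (N:ℂ)⁻¹ • S := by
      calc e * x i - x i * e
          = (N:ℂ)⁻¹ • ((∑ k ∈ Finset.range N, E k) * x i)
            - (N:ℂ)⁻¹ • (x i * (∑ k ∈ Finset.range N, E k)) := by
            rw [he_def, smul_mul_assoc, mul_smul_comm]
        _ = (N:ℂ)⁻¹ • ((∑ k ∈ Finset.range N, E k * x i)
            - (∑ k ∈ Finset.range N, x i * E k)) := by
            rw [Finset.sum_mul, Finset.mul_sum, smul_sub]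
        _ = (N:ℂ)⁻¹ • S := by rw [hS_def, ← Finset.sum_sub_distrib]
    have hSS : ‖S‖ * ‖S‖ ≤ (N:ℝ) * (4*X^2) + ((N:ℝ)*(N:ℝ)) * (2*X*tol) := by
      rw [← CStarRing.norm_star_mul_self]
      have hexp : star S * S
          = ∑ k ∈ Finset.range N, ∑ l ∈ Finset.range N, star (z k i) * z l i := by
        rw [hS_def, star_sum, Finset.sum_mul_sum]
      rw [hexp]
      refine le_trans (norm_sum_le _ _) ?_
      refine le_trans (Finset.sum_le_sum
        (fun k _ => norm_sum_le (Finset.range N) (fun l => star (z k i) * z l i))) ?_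
      have hterm : ∀ k ∈ Finset.range N, ∀ l ∈ Finset.range N,
          ‖star (z k i) * z l i‖ ≤ (if k = l then 4*X^2 else 0) + 2*X*tol := by
        intro k _ l _
        by_cases hkl : k = l
        · rw [if_pos hkl, hkl]
          have h1 : ‖star (z l i) * z l i‖ = ‖z l i‖ * ‖z l i‖ := CStarRing.norm_star_mul_self
          have h2 := hzn l
          have h3 : (0:ℝ) ≤ 2*X*tol := by positivity
          nlinarith [norm_nonneg (z l i)]
        · rw [if_neg hkl, zero_add]
          exact hcross k l hkl
      refine le_trans (Finset.sum_le_sum (fun k hk => Finset.sum_le_sum (hterm k hk))) ?_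
      have hrow : ∀ k ∈ Finset.range N,
          (∑ l ∈ Finset.range N, ((if k = l then 4*X^2 else 0) + 2*X*tol))
            = 4*X^2 + (N:ℝ) * (2*X*tol) := by
        intro k hk
        rw [Finset.sum_add_distrib, Finset.sum_const, Finset.card_range, Finset.sum_ite_eq,
          if_pos hk, nsmul_eq_mul]
      rw [Finset.sum_congr rfl hrow, Finset.sum_const, Finset.card_range, nsmul_eq_mul]
      ring_nf
      exact le_refl _
    -- conclude
    rw [hcomm_eq, norm_smul, hnormNinv]
    have h8 : 8 * X^2 ≤ (N:ℝ) * δ^2 := by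
      have := hNbig
      rw [div_le_iff₀ (by positivity)] at this
      linarith
    have htol4 : 2*X*tol ≤ δ^2/4 := by
      have h1 : 2*X*tol ≤ 2*X*(δ^2/(8*X)) :=
        mul_le_mul_of_nonneg_left htol8 (by positivity)
      have h2 : 2*X*(δ^2/(8*X)) = δ^2/4 := by
        field_simp
        ring
      linarith
    have key : ‖S‖ * ‖S‖ ≤ ((N:ℝ)*δ) * ((N:ℝ)*δ) := by
      nlinarith [hSS, mul_le_mul_of_nonneg_left h8 hNpos.le,
        mul_le_mul_of_nonneg_left htol4 (mul_nonneg hNpos.le hNpos.le)]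
    have hS_le : ‖S‖ ≤ (N:ℝ)*δ := by
      nlinarith [norm_nonneg S, mul_nonneg hNpos.le hδ.le]
    calc (N:ℝ)⁻¹ * ‖S‖ ≤ (N:ℝ)⁻¹ * ((N:ℝ)*δ) :=
        mul_le_mul_of_nonneg_left hS_le (by positivity)
      _ = δ := by field_simp

lemma main_aux (π : B →⋆ₐ[ℂ] C) (hπ : Function.Surjective π)
    (n : ℕ) (x : Fin n → B) (c : C) (ε : ℝ) (hε : 0 < ε) :
    ∃ b : B, π b = c ∧ ‖b‖ ≤ ‖c‖ + ε ∧
      ∀ i : Fin n, ‖b * x i - x i * b‖ ≤ ‖c * π (x i) - π (x i) * c‖ + ε := by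
  obtain ⟨d, hd, hdnorm⟩ := exists_lift_norm_le π hπ c (ε/2) (by positivity)
  have hdlift : ∀ i : Fin n, ∃ di : B, π di = c * π (x i) - π (x i) * c ∧
      ‖di‖ ≤ ‖c * π (x i) - π (x i) * c‖ + ε/2 := fun i =>
    exists_lift_norm_le π hπ _ (ε/2) (by positivity)
  choose dd hdd hddnorm using hdlift
  set D : ℝ := ‖c‖ + ε with hD
  have hD0 : 0 < D := lt_of_lt_of_le hε (le_add_of_nonneg_left (norm_nonneg c))
  have hdD : ‖d‖ ≤ D := le_trans hdnorm (by rw [hD]; linarith)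
  set δ' : ℝ := ε / (2 * (1 + 2*D)) with hδ'
  have hδ'0 : 0 < δ' := by rw [hδ']; positivity
  set jj : Fin n → B := fun i => (d * x i - x i * d) - dd i with hjj
  have hjker : ∀ i, π (jj i) = 0 := by
    intro i
    show π ((d * x i - x i * d) - dd i) = 0
    rw [map_sub, map_sub, map_mul, map_mul, hd, hdd, sub_self]
  obtain ⟨e, hπe, he0, he1, hje, hxe⟩ := exists_quasicentral π n x jj hjker δ' hδ'0
  set u : B := 1 - e with hu
  have hu0 : (0:B) ≤ u := sub_nonneg.mpr he1
  have hu1 : u ≤ 1 := by rw [hu]; simpa using he0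
  have hunorm : ‖u‖ ≤ 1 := by
    refine le_trans (CStarAlgebra.norm_le_norm_of_nonneg_of_le hu0 hu1) ?_
    rw [norm_one]
  have hπu : π u = 1 := by rw [hu, map_sub, map_one, hπe, sub_zero]
  refine ⟨u * d * u, ?_, ?_, ?_⟩
  · rw [map_mul, map_mul, hπu, hd, one_mul, mul_one]
  · calc ‖u * d * u‖ ≤ ‖u * d‖ * ‖u‖ := norm_mul_le _ _
      _ ≤ (‖u‖ * ‖d‖) * ‖u‖ :=
        mul_le_mul_of_nonneg_right (norm_mul_le _ _) (norm_nonneg _)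
      _ ≤ (1 * ‖d‖) * 1 := by
        refine mul_le_mul (mul_le_mul hunorm (le_refl _) (norm_nonneg _) zero_le_one)
          hunorm (norm_nonneg _) (by positivity)
      _ = ‖d‖ := by ring
      _ ≤ ‖c‖ + ε := by linarith
  · intro i
    have hidd : (u * d * u) * x i - x i * (u * d * u)
        = u * (d * x i - x i * d) * u - (u * d) * (e * x i - x i * e)
          - (e * x i - x i * e) * (d * u) := by
      rw [hu]; noncomm_ring
    have hsplit : u * (d * x i - x i * d) * u = u * dd i * u + u * jj i * u := by
      have : d * x i - x i * d = dd i + jj i := by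
        show _ = dd i + ((d * x i - x i * d) - dd i)
        abel
      rw [this]; noncomm_ring
    have h1 : ‖u * dd i * u‖ ≤ ‖c * π (x i) - π (x i) * c‖ + ε/2 := by
      calc ‖u * dd i * u‖ ≤ ‖u * dd i‖ * ‖u‖ := norm_mul_le _ _
        _ ≤ (‖u‖ * ‖dd i‖) * ‖u‖ :=
          mul_le_mul_of_nonneg_right (norm_mul_le _ _) (norm_nonneg _)
        _ ≤ (1 * ‖dd i‖) * 1 :=
          mul_le_mul (mul_le_mul hunorm (le_refl _) (norm_nonneg _) zero_le_one)
            hunorm (norm_nonneg _) (by positivity)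
        _ = ‖dd i‖ := by ring
        _ ≤ ‖c * π (x i) - π (x i) * c‖ + ε/2 := hddnorm i
    have h2 : ‖u * jj i * u‖ ≤ δ' := by
      calc ‖u * jj i * u‖ ≤ ‖u * jj i‖ * ‖u‖ := norm_mul_le _ _
        _ ≤ δ' * 1 := mul_le_mul (by rw [hu] at *; exact hje i) hunorm (norm_nonneg _) hδ'0.le
        _ = δ' := mul_one _
    have h3 : ‖(u * d) * (e * x i - x i * e)‖ ≤ D * δ' := by
      calc ‖(u * d) * (e * x i - x i * e)‖ ≤ ‖u * d‖ * ‖e * x i - x i * e‖ := norm_mul_le _ _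
        _ ≤ (‖u‖ * ‖d‖) * δ' :=
          mul_le_mul (norm_mul_le _ _) (hxe i) (norm_nonneg _)
            (mul_nonneg (norm_nonneg _) (norm_nonneg _))
        _ ≤ (1 * D) * δ' := by
          refine mul_le_mul_of_nonneg_right ?_ hδ'0.le
          exact mul_le_mul hunorm hdD (norm_nonneg _) zero_le_one
        _ = D * δ' := by ring
    have h4 : ‖(e * x i - x i * e) * (d * u)‖ ≤ δ' * D := by
      calc ‖(e * x i - x i * e) * (d * u)‖ ≤ ‖e * x i - x i * e‖ * ‖d * u‖ := norm_mul_le _ _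
        _ ≤ δ' * (‖d‖ * ‖u‖) :=
          mul_le_mul (hxe i) (norm_mul_le _ _) (norm_nonneg _) hδ'0.le
        _ ≤ δ' * (D * 1) := by
          refine mul_le_mul_of_nonneg_left ?_ hδ'0.le
          exact mul_le_mul hdD hunorm (norm_nonneg _) hD0.le
        _ = δ' * D := by ring
    have hδ'sum : δ' + D * δ' + δ' * D = ε/2 := by
      rw [hδ']
      field_simp
      ring
    calc ‖(u * d * u) * x i - x i * (u * d * u)‖
        ≤ ‖u * (d * x i - x i * d) * u‖ + ‖(u * d) * (e * x i - x i * e)‖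
          + ‖(e * x i - x i * e) * (d * u)‖ := by
          rw [hidd]
          exact le_trans (norm_sub_le _ _) (add_le_add (norm_sub_le _ _) le_rfl)
      _ ≤ (‖c * π (x i) - π (x i) * c‖ + ε/2 + δ') + D * δ' + δ' * D := by
          refine add_le_add (add_le_add ?_ h3) h4
          rw [hsplit]
          exact le_trans (norm_add_le _ _) (by linarith [h1, h2])
      _ = ‖c * π (x i) - π (x i) * c‖ + ε/2 + (δ' + D * δ' + δ' * D) := by ring
      _ = ‖c * π (x i) - π (x i) * c‖ + ε := by rw [hδ'sum]; ring

end QuasicentralAux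

/-- Elementwise quasicentral lifting: any element of a quotient lifts with almost the
same norm and with commutator norms against finitely many prescribed elements almost
equal to the corresponding commutator norms in the quotient. -/
theorem quasicentral_lifting
    (B C : Type)
    [NormedRing B] [StarRing B] [CStarRing B] [NormedAlgebra ℂ B]
    [CompleteSpace B] [StarModule ℂ B]
    [NormedRing C] [StarRing C] [CStarRing C] [NormedAlgebra ℂ C]
    [CompleteSpace C] [StarModule ℂ C]
    (π : B →⋆ₐ[ℂ] C) (hπ : Function.Surjective π)
    (n : ℕ) (x : Fin n → B) (c : C) (ε : ℝ) (hε : 0 < ε) :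
    ∃ b : B, π b = c ∧ ‖b‖ ≤ ‖c‖ + ε ∧
      ∀ i : Fin n, ‖b * x i - x i * b‖ ≤ ‖c * π (x i) - π (x i) * c‖ + ε := by
  rcases subsingleton_or_nontrivial C with hC | hC
  · refine ⟨0, Subsingleton.elim _ _, by rw [norm_zero]; positivity, fun i => ?_⟩
    rw [zero_mul, mul_zero, sub_zero, norm_zero]
    positivity
  · letI : CStarAlgebra B := ⟨⟩
    letI : CStarAlgebra C := ⟨⟩
    haveI : Nontrivial B := by
      rcases subsingleton_or_nontrivial B with hB | hB
      · obtain ⟨c1, c2, hne⟩ := exists_pair_ne C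
        obtain ⟨b1, rfl⟩ := hπ c1
        obtain ⟨b2, rfl⟩ := hπ c2
        exact absurd (congrArg π (Subsingleton.elim b1 b2)) hne
      · exact hB
    letI := CStarAlgebra.spectralOrder B
    haveI := CStarAlgebra.spectralOrderedRing B
    letI := CStarAlgebra.spectralOrder C
    haveI := CStarAlgebra.spectralOrderedRing C
    exact main_aux π hπ n x c ε hε
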